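/- For every n ≥ 1 and unary predicates P₁,…,P_n, the negation ¬∃x₁…∃x_n (z₀ < x₁ < … < x_n < z₁ ∧ ⋀_{i=1}^n P_i(x_i)) is equivalent over Dedekind complete chains (expanded by all TL(U,S)-definable predicates) to a disjunction of ∃∀-formulas in the expanded signature. -/

import Mathlib

/-- Syntax of the temporal logic TL(U,S) with strict Until and strict Since. -/
inductive TL (σ : Type) : Type
  | tt : TL σ
  | atom : σ → TL σ
  | neg : TL σ → TL σ
  | or : TL σ → TL σ → TL σ
  | and : TL σ → TL σ → TL σ
  | until_ : TL σ → TL σ → TL σ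
  | since : TL σ → TL σ → TL σ

/-- Semantics of TL(U,S) over a chain: a linear order `T` with interpretation `I`. -/
def TL.sat {σ T : Type} [LinearOrder T] (I : σ → Set T) : TL σ → T → Prop
  | .tt, _ => True
  | .atom p, t => t ∈ I p
  | .neg F, t => ¬ TL.sat I F t
  | .or F G, t => TL.sat I F t ∨ TL.sat I G t
  | .and F G, t => TL.sat I F t ∧ TL.sat I G t
  | .until_ F G, t => ∃ t', t < t' ∧ TL.sat I G t' ∧ ∀ s, t < s → s < t' → TL.sat I F s
  | .since F G, t => ∃ t', t' < t ∧ TL.sat I G t' ∧ ∀ s, t' < s → s < t → TL.sat I F s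

/-- K⁻(F) := ¬((¬F) S True). -/
def TL.kminus {σ : Type} (F : TL σ) : TL σ := .neg (.since (.neg F) .tt)

/-- K⁺(F) := ¬((¬F) U True). -/
def TL.kplus {σ : Type} (F : TL σ) : TL σ := .neg (.until_ (.neg F) .tt)

/-- G F := ¬(True U ¬F): F holds everywhere strictly after the current point. -/
def TL.G {σ : Type} (F : TL σ) : TL σ := .neg (.until_ .tt (.neg F))

/-- G⁻ F := ¬(True S ¬F): F holds everywhere strictly before the current point. -/
def TL.Gm {σ : Type} (F : TL σ) : TL σ := .neg (.since .tt (.neg F))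

/-- Syntax of FOMLO: first-order monadic logic of order (variables are natural numbers). -/
inductive FO (σ : Type) : Type
  | lt : ℕ → ℕ → FO σ
  | eq : ℕ → ℕ → FO σ
  | atom : σ → ℕ → FO σ
  | neg : FO σ → FO σ
  | or : FO σ → FO σ → FO σ
  | and : FO σ → FO σ → FO σ
  | ex : ℕ → FO σ → FO σ
  | all : ℕ → FO σ → FO σ

/-- Semantics of FOMLO over a chain, with a valuation of the variables. -/
def FO.sat {σ T : Type} [LinearOrder T] (I : σ → Set T) : FO σ → (ℕ → T) → Prop
  | .lt i j, v => v i < v j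
  | .eq i j, v => v i = v j
  | .atom p i, v => v i ∈ I p
  | .neg φ, v => ¬ FO.sat I φ v
  | .or φ ψ, v => FO.sat I φ v ∨ FO.sat I ψ v
  | .and φ ψ, v => FO.sat I φ v ∧ FO.sat I ψ v
  | .ex i φ, v => ∃ t, FO.sat I φ (Function.update v i t)
  | .all i φ, v => ∀ t, FO.sat I φ (Function.update v i t)

/-- Free variables of a FOMLO formula. -/
def FO.freeVars {σ : Type} : FO σ → Set ℕ
  | .lt i j => {i, j}
  | .eq i j => {i, j}
  | .atom _ i => {i}
  | .neg φ => φ.freeVars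
  | .or φ ψ => φ.freeVars ∪ ψ.freeVars
  | .and φ ψ => φ.freeVars ∪ ψ.freeVars
  | .ex i φ => φ.freeVars \ {i}
  | .all i φ => φ.freeVars \ {i}

/-- Quantifier-free one-variable (propositional) formulas over the monadic predicates. -/
inductive QF (σ : Type) : Type
  | tt : QF σ
  | atom : σ → QF σ
  | neg : QF σ → QF σ
  | or : QF σ → QF σ → QF σ
  | and : QF σ → QF σ → QF σ

def QF.sat {σ T : Type} (I : σ → Set T) : QF σ → T → Prop
  | .tt, _ => True
  | .atom p, t => t ∈ I p
  | .neg φ, t => ¬ QF.sat I φ t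
  | .or φ ψ, t => QF.sat I φ t ∨ QF.sat I ψ t
  | .and φ ψ, t => QF.sat I φ t ∧ QF.sat I ψ t

/-- The propositional temporal formula corresponding to a quantifier-free formula. -/
def QF.toTL {σ : Type} : QF σ → TL σ
  | .tt => .tt
  | .atom p => .atom p
  | .neg φ => .neg φ.toTL
  | .or φ ψ => .or φ.toTL ψ.toTL
  | .and φ ψ => .and φ.toTL ψ.toTL

/-- An ∃∀-formula over the monadic signature `σ` with free variables `z₀,…,z_m`:
`∃ x_n … x₀, (⋀_k z_k = x_{idx k}) ∧ x₀ < … < x_n ∧ ⋀_j α_j(x_j) ∧`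
each `βmid j` holds throughout the open interval `(x_j, x_{j+1})`,
`βhi` holds everywhere after `x_n`, and `βlo` holds everywhere before `x₀`. -/
structure EAForm (σ : Type) (m : ℕ) where
  n : ℕ
  idx : Fin (m + 1) → Fin (n + 1)
  α : Fin (n + 1) → QF σ
  βmid : Fin n → QF σ
  βlo : QF σ
  βhi : QF σ

/-- Semantics of ∃∀-formulas. -/
def EAForm.sat {σ : Type} {m : ℕ} {T : Type} [LinearOrder T] (e : EAForm σ m)
    (I : σ → Set T) (z : Fin (m + 1) → T) : Prop :=
  ∃ x : Fin (e.n + 1) → T, StrictMono x ∧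
    (∀ k, z k = x (e.idx k)) ∧
    (∀ j, (e.α j).sat I (x j)) ∧
    (∀ j : Fin e.n, ∀ y, x j.castSucc < y → y < x j.succ → (e.βmid j).sat I y) ∧
    (∀ y, y < x 0 → e.βlo.sat I y) ∧
    (∀ y, x (Fin.last e.n) < y → e.βhi.sat I y)

/-- Satisfaction of a disjunction of ∃∀-formulas. -/
def EADisj {σ : Type} {m : ℕ} {T : Type} [LinearOrder T] (L : List (EAForm σ m))
    (I : σ → Set T) (z : Fin (m + 1) → T) : Prop :=
  ∃ f ∈ L, f.sat I z

/-- A linear order is Dedekind complete if every nonempty bounded-above subset has a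
least upper bound and every nonempty bounded-below subset has a greatest lower bound. -/
def DedekindComplete (T : Type) [LinearOrder T] : Prop :=
  (∀ S : Set T, S.Nonempty → BddAbove S → ∃ a, IsLUB S a) ∧
  (∀ S : Set T, S.Nonempty → BddBelow S → ∃ a, IsGLB S a)

/-- The canonical TL(U,S)-expansion of a chain: one unary predicate for each
TL(U,S)-formula `A`, interpreted as the set of points satisfying `A`. -/
def canonExp {σ T : Type} [LinearOrder T] (I : σ → Set T) : TL σ → Set T :=
  fun A => {t | A.sat I t}

/-- `[α₀,β₁,α₁,…,β_n,α_n](z₀,z₁)` : there are `z₀ = x₀ < x₁ < … < x_n = z₁` with each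
`a j` holding at `x_j` and `b j` holding throughout `(x_j, x_{j+1})`
(`b j` stands for `β_{j+1}`). -/
def chainSat {σ T : Type} [LinearOrder T] (I : σ → Set T) (n : ℕ) (a b : ℕ → QF σ)
    (z₀ z₁ : T) : Prop :=
  ∃ x : Fin (n + 1) → T, x 0 = z₀ ∧ x (Fin.last n) = z₁ ∧ StrictMono x ∧
    (∀ j : Fin (n + 1), (a j.val).sat I (x j)) ∧
    (∀ j : Fin n, ∀ y, x j.castSucc < y → y < x j.succ → (b j.val).sat I y)

/-- `nestU [(B₁,A₁),…,(B_k,A_k)] tail = B₁ U (A₁ ∧ (B₂ U (A₂ ∧ … (B_k U (A_k ∧ tail))…)))`. -/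
def nestU {σ : Type} : List (TL σ × TL σ) → TL σ → TL σ
  | [], tail => tail
  | (B, A) :: rest, tail => B.until_ (A.and (nestU rest tail))

/-- `nestS [(B₁,A₁),…,(B_k,A_k)] tail = B₁ S (A₁ ∧ (B₂ S (A₂ ∧ … (B_k S (A_k ∧ tail))…)))`. -/
def nestS {σ : Type} : List (TL σ × TL σ) → TL σ → TL σ
  | [], tail => tail
  | (B, A) :: rest, tail => B.since (A.and (nestS rest tail))

/-- `α_i` as a temporal formula, extended by `True` out of range. -/
def EAForm.aExt {σ : Type} {m : ℕ} (e : EAForm σ m) (i : ℕ) : TL σ :=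
  if h : i < e.n + 1 then (e.α ⟨i, h⟩).toTL else .tt

/-- `β_{i+1}` (interval `(x_i, x_{i+1})`) as a temporal formula, `True` out of range. -/
def EAForm.bExt {σ : Type} {m : ℕ} (e : EAForm σ m) (i : ℕ) : TL σ :=
  if h : i < e.n then (e.βmid ⟨i, h⟩).toTL else .tt

/-- The future part `A_k ∧ (B_{k+1} U (A_{k+1} ∧ … (A_n ∧ G B_{n+1})…))` of the
translation of a one-free-variable ∃∀-formula (with `z₀ = x_k`). -/
def EAForm.futureTL {σ : Type} (e : EAForm σ 0) : TL σ :=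
  (e.aExt (e.idx 0).val).and
    (nestU (List.ofFn (fun j : Fin (e.n - (e.idx 0).val) =>
        (e.bExt ((e.idx 0).val + j.val), e.aExt ((e.idx 0).val + j.val + 1))))
      e.βhi.toTL.G)

/-- The past part `A_k ∧ (B_k S (A_{k-1} ∧ … (A₀ ∧ G⁻ B₀)…))` of the translation. -/
def EAForm.pastTL {σ : Type} (e : EAForm σ 0) : TL σ :=
  (e.aExt (e.idx 0).val).and
    (nestS (List.ofFn (fun j : Fin (e.idx 0).val =>
        (e.bExt ((e.idx 0).val - 1 - j.val), e.aExt ((e.idx 0).val - 1 - j.val))))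
      e.βlo.toTL.Gm)

/-- `Fseq a b n j` is the temporal formula `F_{n-j}` where `F_n := α_n` and
`F_{i-1} := α_{i-1} ∧ (β_i U F_i)`; here `b i` stands for `β_{i+1}`. -/
def Fseq {σ : Type} (a b : ℕ → QF σ) (n : ℕ) : ℕ → TL σ
  | 0 => (a n).toTL
  | j + 1 => ((a (n - j - 1)).toTL).and (((b (n - j - 1)).toTL).until_ (Fseq a b n j))

/-- Syntax of the temporal logic TL(U,K⁻) with strict Until and the modality K⁻. -/
inductive TLK (σ : Type) : Type
  | tt : TLK σ
  | atom : σ → TLK σ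
  | neg : TLK σ → TLK σ
  | or : TLK σ → TLK σ → TLK σ
  | and : TLK σ → TLK σ → TLK σ
  | until_ : TLK σ → TLK σ → TLK σ
  | kminus : TLK σ → TLK σ

/-- Semantics of TL(U,K⁻): `K⁻(F)` holds at `t` iff `t = sup{t' < t : F(t')}`. -/
def TLK.sat {σ T : Type} [LinearOrder T] (I : σ → Set T) : TLK σ → T → Prop
  | .tt, _ => True
  | .atom p, t => t ∈ I p
  | .neg F, t => ¬ TLK.sat I F t
  | .or F G, t => TLK.sat I F t ∨ TLK.sat I G t
  | .and F G, t => TLK.sat I F t ∧ TLK.sat I G t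
  | .until_ F G, t => ∃ t', t < t' ∧ TLK.sat I G t' ∧ ∀ s, t < s → s < t' → TLK.sat I F s
  | .kminus F, t => IsLUB {t' | t' < t ∧ TLK.sat I F t'} t

/-- Syntactically future TL(U,K⁻) formulas: Boolean combinations of atoms and
Until-formulas. -/
inductive SynFuture {σ : Type} : TLK σ → Prop
  | tt : SynFuture .tt
  | atom (p : σ) : SynFuture (.atom p)
  | until_ (F G : TLK σ) : SynFuture (.until_ F G)
  | neg {F} : SynFuture F → SynFuture (.neg F)
  | or {F G} : SynFuture F → SynFuture G → SynFuture (.or F G)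
  | and {F G} : SynFuture F → SynFuture G → SynFuture (.and F G)

/-- The subchain of a chain restricted to `[t₀,∞)`: the interpretation induced on the
subtype `{t // t₀ ≤ t}`. -/
def restrictI {σ T : Type} (I : σ → Set T) [LinearOrder T] (t₀ : T) :
    σ → Set {t : T // t₀ ≤ t} :=
  fun p => {s | s.val ∈ I p}

/-- A (z₀,z₁)-∃∀ formula: either `z₀ > z₁`, or `z₀ = z₁`, or a formula
`[α₀,β₁,…,β_n,α_n](z₀,z₁)`. -/
inductive IntervalEA (σ : Type) : Type
  | gt : IntervalEA σ
  | eq : IntervalEA σ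
  | chain (n : ℕ) (a b : ℕ → QF σ) : IntervalEA σ

def IntervalEA.sat {σ T : Type} [LinearOrder T] (I : σ → Set T) :
    IntervalEA σ → T → T → Prop
  | .gt, z₀, z₁ => z₁ < z₀
  | .eq, z₀, z₁ => z₀ = z₁
  | .chain n a b, z₀, z₁ => chainSat I n a b z₀ z₁

/-! ### Auxiliary definitions for the proof -/

/-- Extend `P : Fin (n+1) → σ` to `ℕ`. -/
def pOf {σ : Type} (n : ℕ) (P : Fin (n + 1) → σ) : ℕ → σ :=
  fun i => if h : i < n + 1 then P ⟨i, h⟩ else P 0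

/-- `psiF p n j` is the formula `φ_{n-j} = P_{n-j} ∧ (⊤ U φ_{n-j+1})`, with
`φ_n = P_n`. -/
def psiF {σ : Type} (p : ℕ → σ) (n : ℕ) : ℕ → TL σ
  | 0 => .atom (p n)
  | (j + 1) => .and (.atom (p (n - (j + 1)))) (.until_ .tt (psiF p n j))

/-- Number of `true`s of `s` below `k`. -/
def cntB (s : ℕ → Bool) : ℕ → ℕ
  | 0 => 0
  | (k + 1) => cntB s k + (if s k then 1 else 0)

/-- Extend a Boolean pattern on `Fin (n+1)` to `ℕ` by `false`. -/
def extB (n : ℕ) (s : Fin (n + 1) → Bool) : ℕ → Bool :=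
  fun k => if h : k < n + 1 then s ⟨k, h⟩ else false

/-- The position of the `j`-th `true` of `s` (searching below `N`). -/
def kOfB (s : ℕ → Bool) (N j : ℕ) : ℕ :=
  Nat.findGreatest (fun k => cntB s k = j) N

lemma cntB_succ (s : ℕ → Bool) (k : ℕ) :
    cntB s (k + 1) = cntB s k + (if s k then 1 else 0) := rfl

lemma cntB_mono (s : ℕ → Bool) : Monotone (cntB s) :=
  monotone_nat_of_le_succ fun k => by rw [cntB_succ]; omega

lemma cntB_add_eq (s : ℕ → Bool) (N : ℕ) (h : ∀ k, N ≤ k → s k = false) :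
    ∀ m, cntB s (N + m) = cntB s N := by
  intro m
  induction m with
  | zero => rfl
  | succ m ih =>
    rw [show N + (m + 1) = (N + m) + 1 from rfl, cntB_succ, h (N + m) (by omega)]
    simpa using ih

lemma cntB_le_of_false_beyond (s : ℕ → Bool) (N : ℕ) (h : ∀ k, N ≤ k → s k = false) :
    ∀ k, cntB s k ≤ cntB s N := by
  intro k
  rcases le_total k N with hk | hk
  · exact cntB_mono s hk
  · obtain ⟨m, rfl⟩ := Nat.exists_eq_add_of_le hk
    exact le_of_eq (cntB_add_eq s N h m)

lemma exists_cntB_eq (s : ℕ → Bool) :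
    ∀ N j, j ≤ cntB s N → ∃ k, k ≤ N ∧ cntB s k = j := by
  intro N
  induction N with
  | zero =>
    intro j hj
    have hj0 : j = 0 := by simpa [cntB] using hj
    exact ⟨0, le_rfl, by simp [cntB, hj0]⟩
  | succ N ih =>
    intro j hj
    rcases le_or_gt j (cntB s N) with h | h
    · obtain ⟨k, hk, hck⟩ := ih j h
      exact ⟨k, by omega, hck⟩
    · refine ⟨N + 1, le_rfl, ?_⟩
      have h2 : cntB s (N + 1) ≤ cntB s N + 1 := by rw [cntB_succ]; split <;> omega
      omega

lemma cntB_inj_true (s : ℕ → Bool) {k k' : ℕ} (hk : s k = true) (hk' : s k' = true)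
    (h : cntB s k = cntB s k') : k = k' := by
  rcases lt_trichotomy k k' with hlt | he | hlt
  · have h1 : cntB s (k + 1) = cntB s k + 1 := by rw [cntB_succ, hk]; simp
    have h2 : cntB s (k + 1) ≤ cntB s k' := cntB_mono s hlt
    omega
  · exact he
  · have h1 : cntB s (k' + 1) = cntB s k' + 1 := by rw [cntB_succ, hk']; simp
    have h2 : cntB s (k' + 1) ≤ cntB s k := cntB_mono s hlt
    omega

lemma kOfB_spec (s : ℕ → Bool) (N j : ℕ) (h : j < cntB s N) :
    cntB s (kOfB s N j) = j ∧ s (kOfB s N j) = true ∧ kOfB s N j + 1 ≤ N := by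
  classical
  obtain ⟨k, hk, hck⟩ := exists_cntB_eq s N j h.le
  have h1 : cntB s (kOfB s N j) = j := Nat.findGreatest_spec (P := fun k => cntB s k = j) hk hck
  have h2 : kOfB s N j ≤ N := Nat.findGreatest_le N
  have h3 : kOfB s N j ≠ N := by rintro e; rw [e] at h1; omega
  have h4 : kOfB s N j + 1 ≤ N := by omega
  refine ⟨h1, ?_, h4⟩
  have h5 : ¬ (cntB s (kOfB s N j + 1) = j) := by
    exact Nat.findGreatest_is_greatest (P := fun k => cntB s k = j) (n := N)
      (k := kOfB s N j + 1) (Nat.lt_succ_self _) h4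
  by_contra hs
  have hs' : s (kOfB s N j) = false := by
    cases hfb : s (kOfB s N j) with
    | false => rfl
    | true => exact absurd hfb hs
  exact h5 (by rw [cntB_succ, hs', h1]; simp)

/-- The pattern ∃∀-form: existential points are the `c`-values of a weakly monotone
sequence `c₀ = z₀ ≤ c₁ ≤ … ≤ c_{n+1} = z₁` whose strict steps are marked by `s`; the
interval between consecutive distinct values carries the negated formula `φ_k`. -/
def patEA {σ : Type} (n : ℕ) (P : Fin (n + 1) → σ) (s : Fin (n + 1) → Bool) :
    EAForm (TL σ) 1 where
  n := cntB (extB n s) (n + 1)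
  idx := fun i => if i.val = 0 then 0 else Fin.last _
  α := fun _ => .tt
  βmid := fun j => .neg (.atom (psiF (pOf n P) n (n - kOfB (extB n s) (n + 1) j.val)))
  βlo := .tt
  βhi := .tt

/-- The ∃∀-form expressing `z₁ < z₀`. -/
def gtEA (σ : Type) : EAForm σ 1 where
  n := 1
  idx := fun i => if i.val = 0 then 1 else 0
  α := fun _ => .tt
  βmid := fun _ => .tt
  βlo := .tt
  βhi := .tt
/-- for n ≥ 1, the negation of ∃x₁…∃x_n (z₀ < x₁ < … < x_n < z₁ ∧ ⋀ P_i(x_i))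
is equivalent over Dedekind complete chains, in the canonical TL(U,S)-expansion, to a
disjunction of ∃∀-formulas in the expanded signature. -/
theorem neg_occurrence_chain (σ : Type) (n : ℕ) (P : Fin (n + 1) → σ) :
    ∃ L : List (EAForm (TL σ) 1),
      ∀ (T : Type) [LinearOrder T], DedekindComplete T →
        ∀ (I : σ → Set T) (z : Fin 2 → T),
          ((¬ ∃ x : Fin (n + 1) → T, StrictMono x ∧
              (∀ i, z 0 < x i ∧ x i < z 1) ∧ (∀ i, x i ∈ I (P i))) ↔
            EADisj L (canonExp I) z) := by
  classical
  refine ⟨gtEA (TL σ) :: (Finset.univ : Finset (Fin (n + 1) → Bool)).toList.map (patEA n P),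
    ?_⟩
  intro T _ hDC I z
  have hpP : ∀ (i : ℕ) (h : i < n + 1), pOf n P i = P ⟨i, h⟩ := fun i h => by simp [pOf, h]
  have psiHead : ∀ (j : ℕ) (t : T), (psiF (pOf n P) n j).sat I t → t ∈ I (pOf n P (n - j)) := by
    intro j t ht
    cases j with
    | zero => exact ht
    | succ j => exact ht.1
  have SAT : ∀ (x : Fin (n + 1) → T), StrictMono x → (∀ i, x i ∈ I (P i)) →
      ∀ j (hj : j ≤ n), (psiF (pOf n P) n j).sat I (x ⟨n - j, by omega⟩) := by
    intro x hx hPx j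
    induction j with
    | zero =>
      intro _
      show x ⟨n - 0, _⟩ ∈ I (pOf n P n)
      rw [hpP n (by omega)]
      exact hPx ⟨n, by omega⟩
    | succ j ih =>
      intro hj
      refine ⟨?_, ⟨x ⟨n - j, by omega⟩, ?_, ih (by omega), fun s _ _ => trivial⟩⟩
      · show x ⟨n - (j + 1), _⟩ ∈ I (pOf n P (n - (j + 1)))
        rw [hpP (n - (j + 1)) (by omega)]
        exact hPx ⟨n - (j + 1), by omega⟩
      · exact hx (show (⟨n - (j + 1), by omega⟩ : Fin (n + 1)) < ⟨n - j, by omega⟩ by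
          simp only [Fin.mk_lt_mk]; omega)
  have KEY1 : ∀ c : ℕ → T, c 0 = z 0 → c (n + 1) = z 1 →
      (∀ k, k ≤ n → ∀ y, c k < y → y < c (k + 1) → ¬ (psiF (pOf n P) n (n - k)).sat I y) →
      ¬ ∃ x : Fin (n + 1) → T, StrictMono x ∧ (∀ i, z 0 < x i ∧ x i < z 1) ∧
        (∀ i, x i ∈ I (P i)) := by
    rintro c hc0 hc1 hint ⟨x, hxm, hbd, hPx⟩
    have hsat : ∀ k (hk : k ≤ n), (psiF (pOf n P) n (n - k)).sat I (x ⟨k, by omega⟩) := by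
      intro k hk
      have h := SAT x hxm hPx (n - k) (by omega)
      have e : (⟨n - (n - k), by omega⟩ : Fin (n + 1)) = ⟨k, by omega⟩ := by
        simp only [Fin.mk.injEq]; omega
      rwa [e] at h
    have main : ∀ k (hk : k ≤ n), c k < x ⟨k, by omega⟩ := by
      intro k
      induction k with
      | zero => intro _; rw [hc0]; exact (hbd _).1
      | succ k ih =>
        intro hk
        have h1 : c k < x ⟨k, by omega⟩ := ih (by omega)
        have h3 : c (k + 1) ≤ x ⟨k, by omega⟩ :=
          not_lt.1 (fun h => hint k (by omega) _ h1 h (hsat k (by omega)))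
        exact lt_of_le_of_lt h3 (hxm (show (⟨k, by omega⟩ : Fin (n + 1)) < ⟨k + 1, by omega⟩ by
          simp only [Fin.mk_lt_mk]; omega))
    have h1 : c n < x ⟨n, by omega⟩ := main n le_rfl
    have h2 : c (n + 1) ≤ x ⟨n, by omega⟩ :=
      not_lt.1 (fun h => hint n le_rfl _ h1 h (hsat n le_rfl))
    rw [hc1] at h2
    exact absurd (hbd ⟨n, by omega⟩).2 (not_lt.2 h2)
  constructor
  · -- forward: no chain ⇒ some disjunct
    intro hNB
    rcases lt_or_ge (z 1) (z 0) with hz | hz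
    · refine ⟨gtEA (TL σ), List.mem_cons_self, ![z 1, z 0], ?_, ?_, ?_, ?_, ?_, ?_⟩
      · refine Fin.strictMono_iff_lt_succ.2 ?_
        intro i
        fin_cases i
        exact hz
      · intro k
        fin_cases k <;> simp [gtEA]
      · intro j; trivial
      · intro j y _ _; trivial
      · intro y _; trivial
      · intro y _; trivial
    · -- z 0 ≤ z 1 : the supremum construction
      obtain ⟨hsup, -⟩ := hDC
      obtain ⟨Sset, hSdef⟩ : ∃ Sset : ℕ → T → Set T, ∀ j t y,
          y ∈ Sset j t ↔ (y = z 0 ∨ (z 0 < y ∧ y < t ∧ (psiF (pOf n P) n j).sat I y)) :=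
        ⟨fun j t => {y | y = z 0 ∨ (z 0 < y ∧ y < t ∧ (psiF (pOf n P) n j).sat I y)},
          fun j t y => Iff.rfl⟩
      have hS : ∀ j t, ∃ a, IsLUB (Sset j t) a := by
        intro j t
        refine hsup _ ⟨z 0, (hSdef j t _).2 (Or.inl rfl)⟩ ⟨max (z 0) t, ?_⟩
        intro y hy
        rcases (hSdef j t y).1 hy with rfl | ⟨h1, h2, h3⟩
        · exact le_max_left _ _
        · exact le_max_of_le_right h2.le
      obtain ⟨d, hd0, hdS⟩ : ∃ d : ℕ → T, d 0 = z 1 ∧ ∀ j, IsLUB (Sset j (d j)) (d (j + 1)) :=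
        ⟨fun j => Nat.rec (z 1) (fun j dj => (hS j dj).choose) j, rfl,
          fun j => (hS j _).choose_spec⟩
      have hdz0 : ∀ j, z 0 ≤ d j := by
        intro j
        cases j with
        | zero => rw [hd0]; exact hz
        | succ j => exact (hdS j).1 ((hSdef _ _ _).2 (Or.inl rfl))
      have hdstep : ∀ j, d (j + 1) ≤ d j := by
        intro j
        refine (hdS j).2 ?_
        intro y hy
        rcases (hSdef _ _ _).1 hy with rfl | ⟨h1, h2, h3⟩
        · exact hdz0 j
        · exact h2.le
      have hdz1 : ∀ j, d j ≤ z 1 := by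
        intro j
        induction j with
        | zero => exact le_of_eq hd0
        | succ j ih => exact (hdstep j).trans ih
      have C' : ∀ i, i ≤ n + 1 → ∀ y, z 0 ≤ y → y < d i → ∃ f : ℕ → T,
          (∀ m, n + 1 - i ≤ m → m < n → f m < f (m + 1)) ∧
          (∀ m, n + 1 - i ≤ m → m ≤ n →
            y < f m ∧ z 0 < f m ∧ f m < z 1 ∧ f m ∈ I (pOf n P m)) := by
        intro i
        induction i with
        | zero =>
          intro _ y _ _
          exact ⟨fun _ => y, fun m hm hm' => ((by omega : False).elim),
            fun m hm hm' => ((by omega : False).elim)⟩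
        | succ i ih =>
          intro hi y hy hyd
          obtain ⟨t, ht, hyt, -⟩ := (hdS i).exists_between hyd
          rcases (hSdef _ _ _).1 ht with rfl | ⟨htz0, htd, htpsi⟩
          · exact absurd hyt (not_lt.2 hy)
          · obtain ⟨f, hf1, hf2⟩ := ih (by omega) t htz0.le htd
            refine ⟨fun m => if m = n - i then t else f m, ?_, ?_⟩
            · intro m hm1 hm2
              dsimp only
              by_cases hm : m = n - i
              · subst hm
                rw [if_pos rfl, if_neg (by omega)]
                exact (hf2 (n - i + 1) (by omega) (by omega)).1
              · rw [if_neg hm, if_neg (by omega)]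
                exact hf1 m (by omega) hm2
            · intro m hm1 hm2
              dsimp only
              by_cases hm : m = n - i
              · subst hm
                rw [if_pos rfl]
                exact ⟨hyt, htz0, lt_of_lt_of_le htd (hdz1 i), psiHead i t htpsi⟩
              · rw [if_neg hm]
                have h5 := hf2 m (by omega) hm2
                exact ⟨hyt.trans h5.1, h5.2.1, h5.2.2.1, h5.2.2.2⟩
      obtain ⟨c, hcdef⟩ : ∃ c : ℕ → T, ∀ k, c k = if k = 0 then z 0 else d (n + 1 - k) :=
        ⟨_, fun k => rfl⟩
      have c0 : c 0 = z 0 := by rw [hcdef]; simp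
      have c1 : c (n + 1) = z 1 := by
        rw [hcdef, if_neg (by omega), show n + 1 - (n + 1) = 0 by omega, hd0]
      have hcz0 : ∀ k, z 0 ≤ c k := by
        intro k
        rw [hcdef]
        split
        · exact le_rfl
        · exact hdz0 _
      have hchi : ∀ k, n + 1 ≤ k → c k = c (k + 1) := by
        intro k hk
        rw [hcdef k, hcdef (k + 1), if_neg (by omega), if_neg (by omega),
          show n + 1 - k = 0 by omega, show n + 1 - (k + 1) = 0 by omega]
      have COND : ∀ k, k ≤ n → ∀ y, c k < y → y < c (k + 1) →
          ¬ (psiF (pOf n P) n (n - k)).sat I y := by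
        intro k hk y h1 h2 hy
        rcases Nat.eq_zero_or_pos k with rfl | hpos
        · -- k = 0 : a witness would give a full chain, contradicting hNB
          have hyz0 : z 0 < y := by rwa [c0] at h1
          have hyd : y < d n := by
            rw [hcdef, if_neg (by omega), show n + 1 - (0 + 1) = n by omega] at h2
            exact h2
          obtain ⟨f, hf1, hf2⟩ := C' n (by omega) y hyz0.le hyd
          apply hNB
          obtain ⟨g, hgdef⟩ : ∃ g : Fin (n + 1) → T,
              ∀ i, g i = if i.val = 0 then y else f i.val := ⟨_, fun i => rfl⟩
          refine ⟨g, ?_, ?_, ?_⟩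
          · rw [Fin.strictMono_iff_lt_succ]
            intro i
            rw [hgdef, hgdef]
            simp only [Fin.coe_castSucc, Fin.val_succ]
            rw [if_neg (show ¬((i : ℕ) + 1 = 0) by omega)]
            by_cases hi0 : i.val = 0
            · rw [if_pos hi0, hi0]
              exact (hf2 1 (by omega) (by have := i.isLt; omega)).1
            · rw [if_neg hi0]
              exact hf1 i.val (by omega) i.isLt
          · intro i
            rw [hgdef]
            by_cases hi0 : i.val = 0
            · rw [if_pos hi0]
              exact ⟨hyz0, lt_of_lt_of_le hyd (hdz1 n)⟩
            · rw [if_neg hi0]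
              have h5 := hf2 i.val (by omega) (by have := i.isLt; omega)
              exact ⟨h5.2.1, h5.2.2.1⟩
          · intro i
            rw [hgdef]
            by_cases hi0 : i.val = 0
            · rw [if_pos hi0]
              have hmem : y ∈ I (pOf n P 0) := by
                have h6 := psiHead (n - 0) y hy
                rwa [show n - (n - 0) = 0 by omega] at h6
              rw [hpP 0 (by omega)] at hmem
              have he : P i = P ⟨0, by omega⟩ := by
                congr 1
                exact Fin.ext hi0
              rw [he]
              exact hmem
            · rw [if_neg hi0]
              have h5 := (hf2 i.val (by omega) (by have := i.isLt; omega)).2.2.2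
              rw [hpP i.val i.isLt] at h5
              exact h5
        · -- k ≥ 1 : contradicts the supremum property
          have e1 : c k = d (n + 1 - k) := by rw [hcdef, if_neg (by omega)]
          have e2 : c (k + 1) = d (n - k) := by
            rw [hcdef, if_neg (by omega)]
            congr 1
            omega
          have hyS : y ∈ Sset (n - k) (d (n - k)) := by
            refine (hSdef _ _ _).2 (Or.inr ⟨lt_of_le_of_lt (hcz0 k) h1, ?_, hy⟩)
            rw [← e2]
            exact h2
          have hub : y ≤ d (n - k + 1) := (hdS (n - k)).1 hyS
          rw [show n - k + 1 = n + 1 - k by omega, ← e1] at hub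
          exact absurd h1 (not_lt.2 hub)
      -- the Boolean pattern of strict steps of c
      obtain ⟨s0, hs0def⟩ : ∃ s0 : Fin (n + 1) → Bool,
          ∀ i : Fin (n + 1), s0 i = decide (c i.val < c (i.val + 1)) := ⟨_, fun i => rfl⟩
      have hs'true : ∀ k, (extB n s0 k = true) ↔ c k < c (k + 1) := by
        intro k
        by_cases h : k < n + 1
        · simp [extB, h, hs0def]
        · have e1 : c k = c (k + 1) := hchi k (by omega)
          simp [extB, h, e1]
      have hfb : ∀ k, n + 1 ≤ k → extB n s0 k = false := by
        intro k hk
        simp [extB, show ¬ (k < n + 1) by omega]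
      have hle : ∀ k, cntB (extB n s0) k ≤ cntB (extB n s0) (n + 1) :=
        cntB_le_of_false_beyond _ (n + 1) hfb
      have hcmono : Monotone c := by
        apply monotone_nat_of_le_succ
        intro k
        rcases Nat.eq_zero_or_pos k with rfl | hpos
        · rw [c0, hcdef 1, if_neg (by omega)]
          exact hdz0 _
        · rcases le_or_gt k n with hkn | hkn
          · rw [hcdef k, hcdef (k + 1), if_neg (by omega), if_neg (by omega),
              show n + 1 - k = (n + 1 - (k + 1)) + 1 by omega]
            exact hdstep _
          · exact le_of_eq (hchi k (by omega))
      have hlvl0 : ∀ k m, cntB (extB n s0) k = cntB (extB n s0) (k + m) → c (k + m) ≤ c k := by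
        intro k m
        induction m with
        | zero => intro _; exact le_rfl
        | succ m ih =>
          intro hcm
          have g1 : cntB (extB n s0) k ≤ cntB (extB n s0) (k + m) := cntB_mono _ (by omega)
          have g2 : cntB (extB n s0) (k + m) ≤ cntB (extB n s0) (k + m + 1) :=
            cntB_mono _ (by omega)
          have hcm' : cntB (extB n s0) (k + (m + 1)) = cntB (extB n s0) ((k + m) + 1) := by
            rw [show k + (m + 1) = (k + m) + 1 by omega]
          have hstep : cntB (extB n s0) ((k + m) + 1) = cntB (extB n s0) (k + m) := by
            rw [← hcm']
            omega
          have hsf : ¬ (c (k + m) < c (k + m + 1)) := by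
            intro hlt
            have := (hs'true (k + m)).2 hlt
            rw [cntB_succ, this] at hstep
            simp at hstep
          calc c (k + (m + 1)) = c ((k + m) + 1) := by rw [show k + (m + 1) = (k + m) + 1 by omega]
          _ ≤ c (k + m) := not_lt.1 hsf
          _ ≤ c k := ih (by omega)
      have hlvl : ∀ k k', cntB (extB n s0) k = cntB (extB n s0) k' → c k = c k' := by
        intro k k' hkk
        rcases le_total k k' with h | h
        · obtain ⟨m, rfl⟩ := Nat.exists_eq_add_of_le h
          exact le_antisymm (hcmono (by omega)) (hlvl0 k m hkk)
        · obtain ⟨m, rfl⟩ := Nat.exists_eq_add_of_le h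
          exact le_antisymm (hlvl0 k' m hkk.symm) (hcmono (by omega))
      obtain ⟨x, hxdef⟩ : ∃ x : Fin (cntB (extB n s0) (n + 1) + 1) → T,
          ∀ j, x j = if j.val < cntB (extB n s0) (n + 1)
            then c (kOfB (extB n s0) (n + 1) j.val) else c (n + 1) :=
        ⟨_, fun j => rfl⟩
      have cx : ∀ k (h : cntB (extB n s0) k < cntB (extB n s0) (n + 1) + 1),
          x ⟨cntB (extB n s0) k, h⟩ = c k := by
        intro k h
        rw [hxdef]
        by_cases h2 : cntB (extB n s0) k < cntB (extB n s0) (n + 1)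
        · rw [if_pos h2]
          exact hlvl _ _ (kOfB_spec _ (n + 1) _ h2).1
        · rw [if_neg h2]
          have h3 := hle k
          exact hlvl (n + 1) k (by omega)
      have exy : ∀ j : Fin (cntB (extB n s0) (n + 1)),
          x (Fin.castSucc j) = c (kOfB (extB n s0) (n + 1) j.val) ∧
          x (Fin.succ j) = c (kOfB (extB n s0) (n + 1) j.val + 1) := by
        intro j
        obtain ⟨hs1, hs2, hs3⟩ := kOfB_spec (extB n s0) (n + 1) j.val j.isLt
        constructor
        · have e : Fin.castSucc j =
              ⟨cntB (extB n s0) (kOfB (extB n s0) (n + 1) j.val),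
                Nat.lt_succ_of_le (hle _)⟩ := Fin.ext (by simp [hs1])
          rw [e, cx]
        · have hc2 : cntB (extB n s0) (kOfB (extB n s0) (n + 1) j.val + 1) = j.val + 1 := by
            rw [cntB_succ, hs2, hs1]
            simp
          have e : Fin.succ j =
              ⟨cntB (extB n s0) (kOfB (extB n s0) (n + 1) j.val + 1),
                Nat.lt_succ_of_le (hle _)⟩ := Fin.ext (by simp [hc2])
          rw [e, cx]
      refine ⟨patEA n P s0, List.mem_cons_of_mem _ (List.mem_map.2 ⟨s0, by simp, rfl⟩),
        x, ?_, ?_, ?_, ?_, ?_, ?_⟩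
      · refine Fin.strictMono_iff_lt_succ.2 ?_
        intro j
        rw [(exy j).1, (exy j).2]
        exact (hs'true _).1 (kOfB_spec (extB n s0) (n + 1) j.val j.isLt).2.1
      · have h0 : z 0 = x ((patEA n P s0).idx 0) := by
          have e : (patEA n P s0).idx 0 = ⟨cntB (extB n s0) 0, Nat.lt_succ_of_le (hle 0)⟩ := by
            apply Fin.ext
            simp [patEA, cntB]
          rw [e]; exact c0.symm.trans (cx 0 (Nat.lt_succ_of_le (hle 0))).symm
        have h1 : z 1 = x ((patEA n P s0).idx 1) := by
          have e : (patEA n P s0).idx 1 =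
              ⟨cntB (extB n s0) (n + 1), Nat.lt_succ_of_le (hle (n + 1))⟩ := by
            apply Fin.ext
            simp [patEA]
          rw [e]; exact c1.symm.trans (cx (n + 1) (Nat.lt_succ_of_le (hle (n + 1)))).symm
        intro k
        fin_cases k
        · exact h0
        · exact h1
      · intro j; trivial
      · intro j y hy1 hy2
        have hs3 := (kOfB_spec (extB n s0) (n + 1) j.val j.isLt).2.2
        show ¬ (psiF (pOf n P) n (n - kOfB (extB n s0) (n + 1) j.val)).sat I y
        refine COND _ (by omega) y ?_ ?_
        · rw [← (exy j).1]; exact hy1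
        · rw [← (exy j).2]; exact hy2
      · intro y _; trivial
      · intro y _; trivial
  · -- backward: disjunct ⇒ no chain
    rintro ⟨e, he, hsat⟩
    rw [List.mem_cons] at he
    rcases he with rfl | he
    · -- gtEA
      obtain ⟨x, hxm, hidx, -, -, -, -⟩ := hsat
      have h0 : z 0 = x 1 := hidx 0
      have h1 : z 1 = x 0 := hidx 1
      have hlt : z 1 < z 0 := by
        rw [h0, h1]
        exact hxm (show (0 : Fin 2) < 1 by decide)
      rintro ⟨x', -, hbd, -⟩
      have := (hbd 0).1.trans (hbd 0).2
      exact absurd this (not_lt.2 hlt.le)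
    · -- pattern
      rw [List.mem_map] at he
      obtain ⟨s, -, rfl⟩ := he
      obtain ⟨x, hxm, hidx, -, hβ, -, -⟩ := hsat
      set s' : ℕ → Bool := extB n s with hs'
      have hfb : ∀ k, n + 1 ≤ k → s' k = false := by
        intro k hk; simp [hs', extB, show ¬ (k < n + 1) by omega]
      have hle : ∀ k, cntB s' k ≤ cntB s' (n + 1) := cntB_le_of_false_beyond s' (n + 1) hfb
      set c : ℕ → T := fun k =>
        x ⟨cntB s' k, Nat.lt_succ_of_le (hle k)⟩ with hc
      have c0 : c 0 = z 0 := by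
        rw [hidx 0]
        show x ⟨cntB s' 0, _⟩ = x ((patEA n P s).idx 0)
        congr 1
        all_goals exact Fin.ext (by simp [patEA, cntB])
      have c1 : c (n + 1) = z 1 := by
        rw [hidx 1]
        show x ⟨cntB s' (n + 1), _⟩ = x ((patEA n P s).idx 1)
        congr 1
        all_goals exact Fin.ext (by simp [patEA, hs'])
      have COND : ∀ k, k ≤ n → ∀ y, c k < y → y < c (k + 1) →
          ¬ (psiF (pOf n P) n (n - k)).sat I y := by
        intro k hk y h1 h2 hy
        cases hsk : s' k with
        | false =>
          have hcnt : cntB s' (k + 1) = cntB s' k := by rw [cntB_succ, hsk]; simp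
          have hcc : c (k + 1) = c k := by
            show x _ = x _
            congr 1
            exact Fin.ext (by simp [hcnt])
          rw [hcc] at h2
          exact absurd (h1.trans h2) (lt_irrefl _)
        | true =>
          have hcnt : cntB s' (k + 1) = cntB s' k + 1 := by rw [cntB_succ, hsk]; simp
          have hjr : cntB s' k < cntB s' (n + 1) := by
            have := hle (k + 1); omega
          obtain ⟨hs1, hs2, hs3⟩ := kOfB_spec s' (n + 1) (cntB s' k) hjr
          have hkof : kOfB s' (n + 1) (cntB s' k) = k := cntB_inj_true s' hs2 hsk hs1
          have hb := hβ ⟨cntB s' k, hjr⟩ y ?_ ?_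
          · rw [show ((patEA n P s).βmid ⟨cntB s' k, hjr⟩) =
                .neg (.atom (psiF (pOf n P) n (n - kOfB (extB n s) (n + 1) (cntB s' k))))
                from rfl, ← hs', hkof] at hb
            exact hb hy
          · -- x j.castSucc < y
            have e : x (Fin.castSucc ⟨cntB s' k, hjr⟩) = c k := by
              show x _ = x _
              congr 1
              all_goals exact Fin.ext (by simp)
            rw [e]; exact h1
          · -- y < x j.succ
            have e : x (Fin.succ ⟨cntB s' k, hjr⟩) = c (k + 1) := by
              show x _ = x _
              congr 1
              exact Fin.ext (by simp [hcnt])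
            rw [e]; exact h2
      exact KEY1 c c0 c1 COND
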